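/- Let ρ, φ : ℝ → ℝ be differentiable at x with ρ(x) > 0, let ħ > 0 and m > 0, and define Ψ : ℝ → ℂ by Ψ(y) = √(ρ(y)) · exp(i·φ(y)), the current velocity v(x) = (ħ/m)·φ'(x), and the osmotic velocity u(x) = −(ħ/(2m))·ρ'(x)/ρ(x). Then ħ²·‖Ψ'(x)‖² = ρ(x)·( m²·v(x)² + m²·u(x)² ). -/

import Mathlib

open Complex

/-- Pointwise identity behind `⟨p̂²⟩ = m²⟨v²⟩ + m²⟨u²⟩`: for `Ψ = √ρ · exp(iφ)` with
`ρ(x) > 0`, current velocity `v = (hbar/m)·φ'` and osmotic velocity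
`u = −(hbar/2m)·ρ'/ρ`, one has `hbar²·‖Ψ'(x)‖² = ρ(x)·(m²v(x)² + m²u(x)²)`. -/
theorem momentum_squared_density_identity
    (ρ φ : ℝ → ℝ) (x : ℝ)
    (hρ : DifferentiableAt ℝ ρ x) (hφ : DifferentiableAt ℝ φ x)
    (hρx : 0 < ρ x) (hbar m : ℝ) (hbar_pos : 0 < hbar) (hm : 0 < m)
    (Ψ : ℝ → ℂ)
    (hΨ : ∀ y, Ψ y = (Real.sqrt (ρ y) : ℂ) * Complex.exp (Complex.I * (φ y : ℝ)))
    (v u : ℝ)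
    (hv : v = (hbar / m) * deriv φ x)
    (hu : u = -(hbar / (2 * m)) * deriv ρ x / ρ x) :
    hbar ^ 2 * ‖deriv Ψ x‖ ^ 2 = ρ x * (m ^ 2 * v ^ 2 + m ^ 2 * u ^ 2) := by
  have hΨf : Ψ = fun y => (Real.sqrt (ρ y) : ℂ) * Complex.exp (Complex.I * (φ y : ℝ)) :=
    funext hΨ
  subst hΨf hv hu
  set s : ℝ := Real.sqrt (ρ x) with hs_def
  have hspos : 0 < s := Real.sqrt_pos.mpr hρx
  have hs : s ≠ 0 := ne_of_gt hspos
  have hfs : HasDerivAt (fun y => Real.sqrt (ρ y)) (deriv ρ x / (2 * s)) x :=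
    hρ.hasDerivAt.sqrt (ne_of_gt hρx)
  have h1 : HasDerivAt (fun y => ((Real.sqrt (ρ y) : ℝ) : ℂ))
      ((deriv ρ x / (2 * s) : ℝ) : ℂ) x := hfs.ofReal_comp
  have h2 : HasDerivAt (fun y => Complex.I * ((φ y : ℝ) : ℂ))
      (Complex.I * ((deriv φ x : ℝ) : ℂ)) x :=
    (hφ.hasDerivAt.ofReal_comp).const_mul Complex.I
  have h3 := h2.cexp
  have hΨd := h1.fun_mul h3
  rw [hΨd.deriv]
  have hnorm1 : ‖Complex.exp (Complex.I * ((φ x : ℝ) : ℂ))‖ = 1 := by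
    rw [Complex.norm_exp]
    simp
  have hfac : ((deriv ρ x / (2 * s) : ℝ) : ℂ) * Complex.exp (Complex.I * ((φ x : ℝ) : ℂ)) +
      ((Real.sqrt (ρ x) : ℝ) : ℂ) *
        (Complex.exp (Complex.I * ((φ x : ℝ) : ℂ)) * (Complex.I * ((deriv φ x : ℝ) : ℂ)))
      = (((deriv ρ x / (2 * s) : ℝ) : ℂ) + ((s * deriv φ x : ℝ) : ℂ) * Complex.I) *
        Complex.exp (Complex.I * ((φ x : ℝ) : ℂ)) := by
    push_cast
    rw [← hs_def]
    ring
  rw [hfac, norm_mul, hnorm1, mul_one]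
  have habs : ‖((deriv ρ x / (2 * s) : ℝ) : ℂ) + ((s * deriv φ x : ℝ) : ℂ) * Complex.I‖ ^ 2
      = (deriv ρ x / (2 * s)) ^ 2 + (s * deriv φ x) ^ 2 := by
    rw [Complex.sq_norm, Complex.normSq_add_mul_I]
  rw [habs]
  have hρs : ρ x = s ^ 2 := by
    rw [hs_def, Real.sq_sqrt hρx.le]
  rw [hρs]
  have hm' : m ≠ 0 := ne_of_gt hm
  field_simp
  ring
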